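/- Let r ≥ 3 be an odd integer and let ε ∈ (0,1). The function φ_r defined for z ∈ ℂ with −π/r < Re z < π + π/r by φ_r(z) = (4πi/r)·( ∫_{−∞}^{−ε} f_z(x) dx + ∫_0^π f_z(ε e^{i(π−t)})·(−i ε e^{i(π−t)}) dt + ∫_ε^∞ f_z(x) dx ), where f_z(w) = e^{(2z−π)w}/(4w·sinh(πw)·sinh(2πw/r)), is holomorphic (complex differentiable) on the open strip {z ∈ ℂ : −π/r < Re z < π + π/r}. -/

import Mathlib

open MeasureTheory intervalIntegral

open Metric Complex Real in
private lemma expFamily_hasDerivAt {μ : Measure ℝ} {w c : ℝ → ℂ} {ε δ : ℝ} {z₀ : ℂ}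
    (hε : 0 < ε) (hδ : 0 < δ)
    (hw : AEStronglyMeasurable w μ) (hc : AEStronglyMeasurable c μ)
    (hwlow : ∀ᵐ t ∂μ, ε ≤ ‖w t‖)
    {B : ℝ → ℝ} (hB : Integrable B μ)
    (hbound : ∀ᵐ t ∂μ, ∀ z ∈ ball z₀ δ,
      ‖2 * w t * (Complex.exp ((2 * z - (Real.pi : ℂ)) * w t) * c t)‖ ≤ B t) :
    DifferentiableAt ℂ
      (fun z => ∫ t, Complex.exp ((2 * z - (Real.pi : ℂ)) * w t) * c t ∂μ) z₀ := by
  set F : ℂ → ℝ → ℂ := fun z t => Complex.exp ((2 * z - (Real.pi : ℂ)) * w t) * c t with hF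
  have mF : ∀ z : ℂ, AEStronglyMeasurable (F z) μ := fun z =>
    (Complex.continuous_exp.comp_aestronglyMeasurable (hw.const_mul _)).mul hc
  have hdiff : ∀ t : ℝ, ∀ z : ℂ, HasDerivAt (fun z => F z t) (2 * w t * F z t) z := by
    intro t z
    have h1 : HasDerivAt (fun z : ℂ => (2 * z - (Real.pi : ℂ)) * w t) (2 * w t) z := by
      simpa using (((hasDerivAt_id z).const_mul (2 : ℂ)).sub_const ((Real.pi : ℂ))).mul_const (w t)
    have := (h1.cexp).mul_const (c t)
    refine this.congr_deriv ?_
    simp only [hF]; ring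
  have hFi : Integrable (F z₀) μ := by
    refine (hB.const_mul ((2 * ε)⁻¹)).mono' (mF z₀) ?_
    filter_upwards [hwlow, hbound] with t h1 h2
    have h3 := h2 z₀ (mem_ball_self hδ)
    have h4 : ‖2 * w t * F z₀ t‖ = 2 * ‖w t‖ * ‖F z₀ t‖ := by
      rw [norm_mul, norm_mul]; norm_num
    have h5 : (0:ℝ) ≤ ‖F z₀ t‖ := norm_nonneg _
    rw [h4] at h3
    have hε2 : (0:ℝ) < 2 * ε := by linarith
    rw [inv_mul_eq_div, le_div_iff₀ hε2]
    nlinarith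
  have key := hasDerivAt_integral_of_dominated_loc_of_deriv_le (μ := μ)
      (F := F) (F' := fun z t => 2 * w t * F z t) (bound := B) (ball_mem_nhds z₀ hδ)
      (Filter.Eventually.of_forall mF) hFi ((hw.const_mul 2).mul (mF z₀))
      (hbound.mono fun t ht z hz => ht z hz) hB
      (Filter.Eventually.of_forall fun t z _ => hdiff t z)
  exact key.2.differentiableAt

open Metric Complex Real in
private lemma csinh_ne_zero {z : ℂ} (h : ∀ k : ℤ, z ≠ k * (Real.pi:ℂ) * Complex.I) :
    Complex.sinh z ≠ 0 := by
  intro h0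
  have : Complex.sin (z * Complex.I) = 0 := by rw [Complex.sin_mul_I, h0, zero_mul]
  rw [Complex.sin_eq_zero_iff] at this
  obtain ⟨k, hk⟩ := this
  apply h (-k)
  have := congrArg (· * Complex.I) hk
  rw [mul_assoc, Complex.I_mul_I] at this
  push_cast
  linear_combination -this

private lemma int_abs_cast_ge {k : ℤ} (h : k ≠ 0) : (1:ℝ) ≤ |(k:ℝ)| := by
  exact_mod_cast Int.one_le_abs h

open Metric Complex Real in
private lemma qdDenom_ne_zero_circle {r : ℕ} (hr3 : 3 ≤ r) {ε : ℝ} (hε0 : 0 < ε) (hε1 : ε < 1)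
    {w : ℂ} (hw : ‖w‖ = ε) :
    4 * w * Complex.sinh ((Real.pi:ℂ) * w) * Complex.sinh (2 * (Real.pi:ℂ) * w / (r:ℂ)) ≠ 0 := by
  have hπ := Real.pi_pos
  have hπc : ((Real.pi:ℝ):ℂ) ≠ 0 := by exact_mod_cast Real.pi_ne_zero
  have hw0 : w ≠ 0 := by intro h; rw [h, norm_zero] at hw; linarith
  have hr0 : (r:ℂ) ≠ 0 := Nat.cast_ne_zero.mpr (by omega)
  have h1 : Complex.sinh ((Real.pi:ℂ) * w) ≠ 0 := by
    apply csinh_ne_zero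
    intro k hk
    have hwk : w = k * Complex.I := by
      apply mul_left_cancel₀ hπc
      rw [hk]; ring
    have hk0 : k ≠ 0 := by
      intro h; rw [h] at hwk; simp at hwk; exact hw0 hwk
    have h2 : (1:ℝ) ≤ |(k:ℝ)| := int_abs_cast_ge hk0
    rw [hwk] at hw
    simp [norm_mul] at hw
    linarith [hw ▸ hε1]
  have h2 : Complex.sinh (2 * (Real.pi:ℂ) * w / (r:ℂ)) ≠ 0 := by
    apply csinh_ne_zero
    intro k hk
    have hwk : w = k * (r:ℂ) * Complex.I / 2 := by
      field_simp at hk ⊢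
      linear_combination hk
    have hk0 : k ≠ 0 := by
      intro h; rw [h] at hwk; simp at hwk; exact hw0 hwk
    have hka : (1:ℝ) ≤ |(k:ℝ)| := int_abs_cast_ge hk0
    rw [hwk] at hw
    simp [norm_mul, norm_div] at hw
    have hr3' : (3:ℝ) ≤ r := by exact_mod_cast hr3
    nlinarith [hw, hka, hr3', hε1]
  intro h0
  rcases mul_eq_zero.1 h0 with h | h
  · rcases mul_eq_zero.1 h with h | h
    · rcases mul_eq_zero.1 h with h | h
      · norm_num at h
      · exact hw0 h
    · exact h1 h
  · exact h2 h

open Metric Complex Real in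
private lemma qdDenom_ne_zero_real {r : ℕ} (hr3 : 3 ≤ r) {x : ℝ} (hx : x ≠ 0) :
    4 * (x:ℂ) * Complex.sinh ((Real.pi:ℂ) * x) *
      Complex.sinh (2 * (Real.pi:ℂ) * x / (r:ℂ)) ≠ 0 := by
  have hπ := Real.pi_pos
  have hr0 : (0:ℝ) < r := by exact_mod_cast (by omega : 0 < r)
  have e1 : ((Real.pi:ℂ) * x) = ((Real.pi * x : ℝ) : ℂ) := by push_cast; ring
  have e2 : (2 * (Real.pi:ℂ) * x / (r:ℂ)) = ((2 * Real.pi * x / r : ℝ) : ℂ) := by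
    push_cast; ring
  rw [e1, e2, ← Complex.ofReal_sinh, ← Complex.ofReal_sinh]
  apply mul_ne_zero
  apply mul_ne_zero
  apply mul_ne_zero
  · norm_num
  · exact_mod_cast hx
  · rw [Ne, Complex.ofReal_eq_zero, Real.sinh_eq_zero]
    exact mul_ne_zero Real.pi_ne_zero hx
  · rw [Ne, Complex.ofReal_eq_zero, Real.sinh_eq_zero]
    exact div_ne_zero (mul_ne_zero (mul_ne_zero two_ne_zero Real.pi_ne_zero) hx) hr0.ne'

open Metric Complex Real in
private lemma norm_tail (r : ℕ) (z : ℂ) (x : ℝ) :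
    ‖2 * (x:ℂ) * (Complex.exp ((2 * z - (Real.pi:ℂ)) * (x:ℂ)) *
      (4 * (x:ℂ) * Complex.sinh ((Real.pi:ℂ) * x) *
        Complex.sinh (2 * (Real.pi:ℂ) * x / (r:ℂ)))⁻¹)‖
    = 2 * |x| * Real.exp ((2 * z.re - Real.pi) * x) /
        (4 * |x| * |Real.sinh (Real.pi * x)| * |Real.sinh (2 * Real.pi * x / r)|) := by
  have e1 : ((Real.pi:ℂ) * x) = ((Real.pi * x : ℝ) : ℂ) := by push_cast; ring
  have e2 : (2 * (Real.pi:ℂ) * x / (r:ℂ)) = ((2 * Real.pi * x / r : ℝ) : ℂ) := by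
    push_cast; ring
  rw [e1, e2, ← Complex.ofReal_sinh, ← Complex.ofReal_sinh]
  have hre : ((2 * z - (Real.pi:ℂ)) * (x:ℂ)).re = (2 * z.re - Real.pi) * x := by
    simp [Complex.mul_re, Complex.sub_re, Complex.mul_im]
  simp [norm_mul, norm_inv, Complex.norm_exp, hre, Complex.norm_real,
    div_eq_mul_inv, mul_inv]
  have a1 : ‖(Complex.sinh ((Real.pi:ℂ) * ↑x))‖ = |Real.sinh (Real.pi * x)| := by
    rw [e1, ← Complex.ofReal_sinh, Complex.norm_real, Real.norm_eq_abs]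
  have a2 : ‖(Complex.sinh (2 * (Real.pi:ℂ) * ↑x * (↑r)⁻¹))‖
      = |Real.sinh (2 * Real.pi * x * (r:ℝ)⁻¹)| := by
    have e3 : (2 * (Real.pi:ℂ) * ↑x * (↑r)⁻¹) = ((2 * Real.pi * x * (r:ℝ)⁻¹ : ℝ) : ℂ) := by
      push_cast; ring
    rw [e3, ← Complex.ofReal_sinh, Complex.norm_real, Real.norm_eq_abs]
  rw [a1, a2]
  ring_nf

private lemma sinh_lower {s t : ℝ} (hs : 0 < s) (hst : s ≤ t) :
    (1 - Real.exp (-(2 * s))) / 2 * Real.exp t ≤ Real.sinh t := by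
  rw [Real.sinh_eq]
  have h1 : Real.exp (-t) = Real.exp t * Real.exp (-(2 * t)) := by
    rw [← Real.exp_add]; ring_nf
  have h2 : Real.exp (-(2 * t)) ≤ Real.exp (-(2 * s)) := Real.exp_le_exp.2 (by linarith)
  nlinarith [Real.exp_pos t]

private lemma myIntegrableOn_exp_Iic (a : ℝ) {b : ℝ} (hb : 0 < b) :
    MeasureTheory.IntegrableOn (fun x => Real.exp (b * x)) (Set.Iic a) := by
  have h := exp_neg_integrableOn_Ioi (-a) hb
  have h2 := (MeasurePreserving.integrableOn_comp_preimage
      (Measure.measurePreserving_neg (volume : Measure ℝ))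
      (Homeomorph.neg ℝ).measurableEmbedding).2 h
  have hpre : (Neg.neg : ℝ → ℝ) ⁻¹' Set.Ioi (-a) = Set.Iio a := by
    ext x; simp [Set.mem_preimage, neg_lt]
  rw [hpre] at h2
  have h3 : MeasureTheory.IntegrableOn (fun x : ℝ => Real.exp (b * x)) (Set.Iio a) := by
    apply h2.congr_fun _ measurableSet_Iio
    intro x _
    simp [Function.comp]
  exact (integrableOn_Iic_iff_integrableOn_Iio).2 h3


/-- The integrand in the contour-integral definition of the quantum dilogarithm. -/
noncomputable def qdInt (r : ℕ) (z w : ℂ) : ℂ :=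
  Complex.exp ((2 * z - (Real.pi : ℂ)) * w) /
    (4 * w * Complex.sinh ((Real.pi : ℂ) * w) * Complex.sinh (2 * (Real.pi : ℂ) * w / (r : ℂ)))

/-- The contour integral over `Ω = (−∞,−ε] ∪ {|x|=ε, Im x > 0} ∪ [ε,∞)`, the semicircle
being parameterized by `γ(t) = ε e^{i(π−t)}`, `t ∈ [0,π]`. -/
noncomputable def qdContour (r : ℕ) (ε : ℝ) (z : ℂ) : ℂ :=
  (∫ x in Set.Iic (-ε), qdInt r z (x : ℂ)) +
  (∫ t in (0:ℝ)..Real.pi,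
      qdInt r z ((ε : ℂ) * Complex.exp (Complex.I * ((Real.pi : ℂ) - (t : ℂ)))) *
        (-Complex.I * (ε : ℂ) * Complex.exp (Complex.I * ((Real.pi : ℂ) - (t : ℂ))))) +
  (∫ x in Set.Ici ε, qdInt r z (x : ℂ))

/-- The quantum dilogarithm `φ_r` with semicircle radius `ε`. -/
noncomputable def qdPhi (r : ℕ) (ε : ℝ) (z : ℂ) : ℂ :=
  (4 * (Real.pi : ℂ) * Complex.I / (r : ℂ)) * qdContour r ε z

set_option maxHeartbeats 2000000 in
theorem qdPhi_differentiableOn (r : ℕ) (hr3 : 3 ≤ r) (hrodd : Odd r)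
    (ε : ℝ) (hε : ε ∈ Set.Ioo (0 : ℝ) 1) :
    DifferentiableOn ℂ (qdPhi r ε)
      {z : ℂ | -Real.pi / r < z.re ∧ z.re < Real.pi + Real.pi / r} := by
  obtain ⟨hε0, hε1⟩ := hε
  have hπ := Real.pi_pos
  have hrpos : (0:ℝ) < r := by exact_mod_cast (by omega : 0 < r)
  intro z₀ hz₀
  obtain ⟨hz1, hz2⟩ := hz₀
  apply DifferentiableAt.differentiableWithinAt
  have hz1' : -(Real.pi / r) < z₀.re := by rw [neg_div] at hz1; exact hz1
  set a := z₀.re with ha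
  set c₁ : ℝ := (a + Real.pi / r) / 2 with hc₁
  set c₂ : ℝ := (Real.pi + Real.pi / r - a) / 2 with hc₂
  have hπr : 0 < Real.pi / r := by positivity
  have hc₁0 : 0 < c₁ := by rw [hc₁]; linarith
  have hc₂0 : 0 < c₂ := by rw [hc₂]; linarith
  set δ : ℝ := min c₁ c₂ with hδdef
  have hδ0 : 0 < δ := lt_min hc₁0 hc₂0
  have hδc₁ : δ ≤ c₁ := min_le_left _ _
  have hδc₂ : δ ≤ c₂ := min_le_right _ _
  have hball : ∀ z ∈ Metric.ball z₀ δ, a - δ < z.re ∧ z.re < a + δ := by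
    intro z hz
    have h2 : ‖(z - z₀)‖ < δ := by rw [← Complex.dist_eq]; exact Metric.mem_ball.mp hz
    have h1 : |(z - z₀).re| ≤ ‖(z - z₀)‖ := Complex.abs_re_le_norm _
    rw [Complex.sub_re] at h1
    have h3 := abs_lt.mp (lt_of_le_of_lt h1 h2)
    exact ⟨by linarith [h3.1], by linarith [h3.2]⟩
  set k₁ : ℝ := (1 - Real.exp (-(2 * (Real.pi * ε)))) / 2 with hk₁
  set k₂ : ℝ := (1 - Real.exp (-(2 * (2 * Real.pi * ε / r)))) / 2 with hk₂
  have hk₁0 : 0 < k₁ := by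
    rw [hk₁]
    have : Real.exp (-(2 * (Real.pi * ε))) < 1 := by
      rw [Real.exp_lt_one_iff]; nlinarith
    linarith
  have hk₂0 : 0 < k₂ := by
    rw [hk₂]
    have : Real.exp (-(2 * (2 * Real.pi * ε / r))) < 1 := by
      rw [Real.exp_lt_one_iff]
      have : 0 < 2 * Real.pi * ε / r := by positivity
      linarith
    linarith
  set K : ℝ := (2 * k₁ * k₂)⁻¹ with hK
  have hK0 : 0 < K := by rw [hK]; positivity
  clear_value a c₁ c₂ δ k₁ k₂ K
  have hqd : ∀ (z w' : ℂ), qdInt r z w' = Complex.exp ((2 * z - (Real.pi:ℂ)) * w') *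
      (4 * w' * Complex.sinh ((Real.pi:ℂ) * w') *
        Complex.sinh (2 * (Real.pi:ℂ) * w' / (r:ℂ)))⁻¹ :=
    fun z w' => div_eq_mul_inv _ _
  -- right tail
  have hright : DifferentiableAt ℂ (fun z => ∫ x in Set.Ici ε,
      Complex.exp ((2 * z - (Real.pi:ℂ)) * (x:ℂ)) *
        (4 * (x:ℂ) * Complex.sinh ((Real.pi:ℂ) * (x:ℂ)) *
          Complex.sinh (2 * (Real.pi:ℂ) * (x:ℂ) / (r:ℂ)))⁻¹) z₀ := by
    apply expFamily_hasDerivAt (ε := ε) (B := fun x => K * Real.exp (-(2 * c₂) * x)) hε0 hδ0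
    · exact Complex.continuous_ofReal.aestronglyMeasurable
    · apply ContinuousOn.aestronglyMeasurable _ measurableSet_Ici
      apply ContinuousOn.inv₀
      · apply Continuous.continuousOn
        fun_prop
      · intro x hx
        simp only [Set.mem_Ici] at hx
        exact qdDenom_ne_zero_real hr3 (hε0.trans_le hx).ne'
    · rw [MeasureTheory.ae_restrict_iff' measurableSet_Ici]
      refine .of_forall fun x hx => ?_
      have : ‖((x:ℝ):ℂ)‖ = |x| := by simp [Complex.norm_real]
      rw [this]
      exact le_trans hx (le_abs_self x)
    · exact ((integrableOn_Ici_iff_integrableOn_Ioi).2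
        (exp_neg_integrableOn_Ioi ε (by positivity : (0:ℝ) < 2 * c₂))).const_mul K
    · rw [MeasureTheory.ae_restrict_iff' measurableSet_Ici]
      refine .of_forall fun x hx z hz => ?_
      simp only [Set.mem_Ici] at hx
      obtain ⟨hz3, hz4⟩ := hball z hz
      have hx0 : 0 < x := lt_of_lt_of_le hε0 hx
      have hS1p : 0 < Real.sinh (Real.pi * x) := by positivity
      have hS2p : 0 < Real.sinh (2 * Real.pi * x / r) := by positivity
      have hS1 : k₁ * Real.exp (Real.pi * x) ≤ Real.sinh (Real.pi * x) := by
        rw [hk₁]; exact sinh_lower (by positivity) (by nlinarith)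
      have hS2 : k₂ * Real.exp (2 * Real.pi * x / r) ≤ Real.sinh (2 * Real.pi * x / r) := by
        rw [hk₂]; exact sinh_lower (by positivity) (by gcongr)
      rw [norm_tail, abs_of_pos hx0, abs_of_pos hS1p, abs_of_pos hS2p]
      calc 2 * x * Real.exp ((2 * z.re - Real.pi) * x) /
            (4 * x * Real.sinh (Real.pi * x) * Real.sinh (2 * Real.pi * x / r))
          = Real.exp ((2 * z.re - Real.pi) * x) /
            (2 * Real.sinh (Real.pi * x) * Real.sinh (2 * Real.pi * x / r)) := by
            field_simp; ring
        _ ≤ Real.exp ((2 * z.re - Real.pi) * x) /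
            (2 * (k₁ * Real.exp (Real.pi * x)) * (k₂ * Real.exp (2 * Real.pi * x / r))) := by
            gcongr
        _ = K * Real.exp ((2 * z.re - 2 * Real.pi - 2 * Real.pi / r) * x) := by
            rw [show (2 * z.re - 2 * Real.pi - 2 * Real.pi / r) * x
                = ((2 * z.re - Real.pi) * x) - Real.pi * x - 2 * Real.pi * x / r by ring,
              Real.exp_sub, Real.exp_sub, hK]
            field_simp
        _ ≤ K * Real.exp (-(2 * c₂) * x) := by
            have hco : 2 * z.re - 2 * Real.pi - 2 * Real.pi / r ≤ -(2 * c₂) := by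
              have e : 2 * Real.pi / (r:ℝ) = 2 * (Real.pi / r) := by ring
              rw [e]
              linarith [hδc₂, hz4, hc₂]
            exact mul_le_mul_of_nonneg_left
              (Real.exp_le_exp.2 (mul_le_mul_of_nonneg_right hco hx0.le)) hK0.le
  -- left tail
  have hleft : DifferentiableAt ℂ (fun z => ∫ x in Set.Iic (-ε),
      Complex.exp ((2 * z - (Real.pi:ℂ)) * (x:ℂ)) *
        (4 * (x:ℂ) * Complex.sinh ((Real.pi:ℂ) * (x:ℂ)) *
          Complex.sinh (2 * (Real.pi:ℂ) * (x:ℂ) / (r:ℂ)))⁻¹) z₀ := by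
    apply expFamily_hasDerivAt (ε := ε) (B := fun x => K * Real.exp ((2 * c₁) * x)) hε0 hδ0
    · exact Complex.continuous_ofReal.aestronglyMeasurable
    · apply ContinuousOn.aestronglyMeasurable _ measurableSet_Iic
      apply ContinuousOn.inv₀
      · apply Continuous.continuousOn
        fun_prop
      · intro x hx
        simp only [Set.mem_Iic] at hx
        have : x < 0 := lt_of_le_of_lt hx (by linarith)
        exact qdDenom_ne_zero_real hr3 this.ne
    · rw [MeasureTheory.ae_restrict_iff' measurableSet_Iic]
      refine .of_forall fun x hx => ?_
      simp only [Set.mem_Iic] at hx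
      have : ‖((x:ℝ):ℂ)‖ = |x| := by simp [Complex.norm_real]
      rw [this, abs_of_neg (lt_of_le_of_lt hx (by linarith))]
      linarith
    · exact (myIntegrableOn_exp_Iic (-ε) (by positivity : (0:ℝ) < 2 * c₁)).const_mul K
    · rw [MeasureTheory.ae_restrict_iff' measurableSet_Iic]
      refine .of_forall fun x hx z hz => ?_
      simp only [Set.mem_Iic] at hx
      obtain ⟨hz3, hz4⟩ := hball z hz
      have hx0 : x < 0 := lt_of_le_of_lt hx (by linarith)
      have hy : ε ≤ -x := by linarith
      have hy0 : 0 < -x := by linarith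
      have hA : |Real.sinh (Real.pi * x)| = Real.sinh (Real.pi * (-x)) := by
        rw [show Real.pi * x = -(Real.pi * (-x)) by ring, Real.sinh_neg, abs_neg,
          abs_of_pos (by positivity)]
      have hB2 : |Real.sinh (2 * Real.pi * x / r)| = Real.sinh (2 * Real.pi * (-x) / r) := by
        rw [show 2 * Real.pi * x / (r:ℝ) = -(2 * Real.pi * (-x) / r) by ring, Real.sinh_neg,
          abs_neg, abs_of_pos (by positivity)]
      have hS1p : 0 < Real.sinh (Real.pi * (-x)) := by positivity
      have hS2p : 0 < Real.sinh (2 * Real.pi * (-x) / r) := by positivity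
      have hS1 : k₁ * Real.exp (Real.pi * (-x)) ≤ Real.sinh (Real.pi * (-x)) := by
        rw [hk₁]; exact sinh_lower (by positivity) (by nlinarith)
      have hS2 : k₂ * Real.exp (2 * Real.pi * (-x) / r) ≤ Real.sinh (2 * Real.pi * (-x) / r) := by
        rw [hk₂]; exact sinh_lower (by positivity) (by gcongr)
      rw [norm_tail, abs_of_neg hx0, hA, hB2]
      calc 2 * -x * Real.exp ((2 * z.re - Real.pi) * x) /
            (4 * -x * Real.sinh (Real.pi * (-x)) * Real.sinh (2 * Real.pi * (-x) / r))
          = Real.exp ((2 * z.re - Real.pi) * x) /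
            (2 * Real.sinh (Real.pi * (-x)) * Real.sinh (2 * Real.pi * (-x) / r)) := by
            rw [div_eq_div_iff (by positivity) (by positivity)]
            ring
        _ ≤ Real.exp ((2 * z.re - Real.pi) * x) /
            (2 * (k₁ * Real.exp (Real.pi * (-x))) * (k₂ * Real.exp (2 * Real.pi * (-x) / r))) := by
            gcongr
        _ = K * Real.exp ((2 * z.re + 2 * Real.pi / r) * x) := by
            rw [show (2 * z.re + 2 * Real.pi / r) * x
                = ((2 * z.re - Real.pi) * x) - Real.pi * (-x) - 2 * Real.pi * (-x) / r by ring,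
              Real.exp_sub, Real.exp_sub, hK]
            field_simp
        _ ≤ K * Real.exp ((2 * c₁) * x) := by
            have hco : 2 * c₁ ≤ 2 * z.re + 2 * Real.pi / r := by
              have e : 2 * Real.pi / (r:ℝ) = 2 * (Real.pi / r) := by ring
              rw [e]
              linarith [hδc₁, hz3, hc₁]
            exact mul_le_mul_of_nonneg_left
              (Real.exp_le_exp.2 (mul_le_mul_of_nonpos_right hco hx0.le)) hK0.le
  -- middle semicircle
  have hWnorm : ∀ t : ℝ,
      ‖(ε:ℂ) * Complex.exp (Complex.I * ((Real.pi:ℂ) - (t:ℂ)))‖ = ε := by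
    intro t
    rw [norm_mul, Complex.norm_real, Real.norm_eq_abs,
      Complex.norm_exp, abs_of_pos hε0]
    have h0 : (Complex.I * ((Real.pi:ℂ) - (t:ℂ))).re = 0 := by
      simp [Complex.mul_re]
    rw [h0, Real.exp_zero, mul_one]
  have hJnorm : ∀ t : ℝ,
      ‖-Complex.I * (ε:ℂ) * Complex.exp (Complex.I * ((Real.pi:ℂ) - (t:ℂ)))‖ = ε := by
    intro t
    rw [show -Complex.I * (ε:ℂ) * Complex.exp (Complex.I * ((Real.pi:ℂ) - (t:ℂ)))
        = -(Complex.I * ((ε:ℂ) * Complex.exp (Complex.I * ((Real.pi:ℂ) - (t:ℂ))))) by ring,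
      norm_neg, norm_mul, Complex.norm_I, one_mul]
    exact hWnorm t
  have hWcont : Continuous (fun t : ℝ =>
      (ε:ℂ) * Complex.exp (Complex.I * ((Real.pi:ℂ) - (t:ℂ)))) := by fun_prop
  have hDW : Continuous (fun t : ℝ =>
      4 * ((ε:ℂ) * Complex.exp (Complex.I * ((Real.pi:ℂ) - (t:ℂ)))) *
        Complex.sinh ((Real.pi:ℂ) * ((ε:ℂ) * Complex.exp (Complex.I * ((Real.pi:ℂ) - (t:ℂ))))) *
        Complex.sinh (2 * (Real.pi:ℂ) * ((ε:ℂ) * Complex.exp (Complex.I * ((Real.pi:ℂ) - (t:ℂ)))) /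
          (r:ℂ))) := by fun_prop
  have hDWne : ∀ t : ℝ,
      4 * ((ε:ℂ) * Complex.exp (Complex.I * ((Real.pi:ℂ) - (t:ℂ)))) *
        Complex.sinh ((Real.pi:ℂ) * ((ε:ℂ) * Complex.exp (Complex.I * ((Real.pi:ℂ) - (t:ℂ))))) *
        Complex.sinh (2 * (Real.pi:ℂ) * ((ε:ℂ) * Complex.exp (Complex.I * ((Real.pi:ℂ) - (t:ℂ)))) /
          (r:ℂ)) ≠ 0 :=
    fun t => qdDenom_ne_zero_circle hr3 hε0 hε1 (hWnorm t)
  have hgc : Continuous (fun t : ℝ =>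
      ‖Complex.sinh ((Real.pi:ℂ) * ((ε:ℂ) * Complex.exp (Complex.I * ((Real.pi:ℂ) - (t:ℂ)))))‖ *
      ‖Complex.sinh (2 * (Real.pi:ℂ) *
          ((ε:ℂ) * Complex.exp (Complex.I * ((Real.pi:ℂ) - (t:ℂ)))) / (r:ℂ))‖) := by fun_prop
  obtain ⟨t₀, ht₀, hmin⟩ := isCompact_Icc.exists_isMinOn
    (Set.nonempty_Icc.mpr Real.pi_pos.le) hgc.continuousOn
  set m : ℝ :=
      ‖Complex.sinh ((Real.pi:ℂ) * ((ε:ℂ) * Complex.exp (Complex.I * ((Real.pi:ℂ) - (t₀:ℂ)))))‖ *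
      ‖Complex.sinh (2 * (Real.pi:ℂ) *
          ((ε:ℂ) * Complex.exp (Complex.I * ((Real.pi:ℂ) - (t₀:ℂ)))) / (r:ℂ))‖ with hm
  have hm0 : 0 < m := by
    have hD := hDWne t₀
    have h12 := mul_ne_zero_iff.1 hD
    have h1 := (mul_ne_zero_iff.1 h12.1).2
    rw [hm]
    exact mul_pos (norm_pos_iff.2 h1) (norm_pos_iff.2 h12.2)
  have hge : ∀ t ∈ Set.Icc (0:ℝ) Real.pi, m ≤
      ‖Complex.sinh ((Real.pi:ℂ) * ((ε:ℂ) * Complex.exp (Complex.I * ((Real.pi:ℂ) - (t:ℂ)))))‖ *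
      ‖Complex.sinh (2 * (Real.pi:ℂ) *
          ((ε:ℂ) * Complex.exp (Complex.I * ((Real.pi:ℂ) - (t:ℂ)))) / (r:ℂ))‖ :=
    fun t ht => isMinOn_iff.1 hmin t ht
  clear_value m
  have hmid : DifferentiableAt ℂ (fun z => ∫ t in Set.Ioc (0:ℝ) Real.pi,
      Complex.exp ((2 * z - (Real.pi:ℂ)) *
        ((ε:ℂ) * Complex.exp (Complex.I * ((Real.pi:ℂ) - (t:ℂ))))) *
      ((4 * ((ε:ℂ) * Complex.exp (Complex.I * ((Real.pi:ℂ) - (t:ℂ)))) *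
        Complex.sinh ((Real.pi:ℂ) * ((ε:ℂ) * Complex.exp (Complex.I * ((Real.pi:ℂ) - (t:ℂ))))) *
        Complex.sinh (2 * (Real.pi:ℂ) * ((ε:ℂ) * Complex.exp (Complex.I * ((Real.pi:ℂ) - (t:ℂ)))) /
          (r:ℂ)))⁻¹ *
       (-Complex.I * (ε:ℂ) * Complex.exp (Complex.I * ((Real.pi:ℂ) - (t:ℂ)))))) z₀ := by
    apply expFamily_hasDerivAt (ε := ε)
      (B := fun _ => 2 * ε * (Real.exp ((2 * (‖z₀‖ + δ) + Real.pi) * ε) * ((4 * ε * m)⁻¹ * ε)))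
      hε0 hδ0
    · exact hWcont.aestronglyMeasurable
    · exact ((hDW.inv₀ hDWne).mul (by fun_prop)).aestronglyMeasurable
    · exact .of_forall fun t => (hWnorm t).ge
    · exact (integrableOn_const (C := Real.exp ((2 * (‖z₀‖ + δ) + Real.pi) * ε) * ((4 * ε * m)⁻¹ * ε))
        measure_Ioc_lt_top.ne).const_mul _
    · rw [MeasureTheory.ae_restrict_iff' measurableSet_Ioc]
      refine .of_forall fun t ht z hz => ?_
      have htIcc : t ∈ Set.Icc (0:ℝ) Real.pi := Set.Ioc_subset_Icc_self ht
      -- norm of exponential factor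
      have hzn : ‖z‖ ≤ ‖z₀‖ + δ := by
        have h1 : ‖z - z₀‖ < δ := by
          rw [← dist_eq_norm]; exact Metric.mem_ball.mp hz
        calc ‖z‖ = ‖z₀ + (z - z₀)‖ := by ring_nf
          _ ≤ ‖z₀‖ + ‖z - z₀‖ := norm_add_le _ _
          _ ≤ ‖z₀‖ + δ := by linarith
      have hexp : ‖Complex.exp ((2 * z - (Real.pi:ℂ)) *
          ((ε:ℂ) * Complex.exp (Complex.I * ((Real.pi:ℂ) - (t:ℂ)))))‖
          ≤ Real.exp ((2 * (‖z₀‖ + δ) + Real.pi) * ε) := by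
        rw [Complex.norm_exp, Real.exp_le_exp]
        have h1 := Complex.re_le_norm ((2 * z - (Real.pi:ℂ)) *
          ((ε:ℂ) * Complex.exp (Complex.I * ((Real.pi:ℂ) - (t:ℂ)))))
        rw [norm_mul] at h1
        have h2 : ‖((ε:ℂ) * Complex.exp (Complex.I * ((Real.pi:ℂ) - (t:ℂ))))‖ = ε := by
          exact hWnorm t
        rw [h2] at h1
        refine h1.trans ?_
        have h3 : ‖(2 * z - (Real.pi:ℂ))‖ ≤ 2 * (‖z₀‖ + δ) + Real.pi := by
          calc ‖(2 * z - (Real.pi:ℂ))‖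
              = ‖2 * z - ((Real.pi:ℝ):ℂ)‖ := rfl
            _ ≤ ‖(2:ℂ) * z‖ + ‖((Real.pi:ℝ):ℂ)‖ := norm_sub_le _ _
            _ = 2 * ‖z‖ + Real.pi := by
                rw [norm_mul]
                simp [Complex.norm_real, abs_of_pos hπ]
            _ ≤ 2 * (‖z₀‖ + δ) + Real.pi := by linarith
        exact mul_le_mul_of_nonneg_right h3 hε0.le
      have hexp1 : ‖Complex.exp (Complex.I * ((Real.pi:ℂ) - (t:ℂ)))‖ = 1 := by
        rw [Complex.norm_exp]
        simp [Complex.mul_re]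
      have hεn : ‖((ε:ℝ):ℂ)‖ = ε := by
        simp [Complex.norm_real, abs_of_pos hε0]
      have h2n : ‖(2:ℂ)‖ = 2 := by simp
      have h4n : ‖(4:ℂ)‖ = 4 := by
        rw [show (4:ℂ) = ((4:ℝ):ℂ) by norm_num]
        simp [Complex.norm_real]
      have hDlow : 4 * ε * m ≤
          ‖4 * ((ε:ℂ) * Complex.exp (Complex.I * ((Real.pi:ℂ) - (t:ℂ)))) *
            Complex.sinh ((Real.pi:ℂ) * ((ε:ℂ) * Complex.exp (Complex.I * ((Real.pi:ℂ) - (t:ℂ))))) *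
            Complex.sinh (2 * (Real.pi:ℂ) *
              ((ε:ℂ) * Complex.exp (Complex.I * ((Real.pi:ℂ) - (t:ℂ)))) / (r:ℂ))‖ := by
        have hprod := hge t htIcc
        simp only [norm_mul, hεn, hexp1, h4n, mul_one, one_mul]
        nlinarith [mul_le_mul_of_nonneg_left hprod (by positivity : (0:ℝ) ≤ 4 * ε)]
      have hDinv : ‖(4 * ((ε:ℂ) * Complex.exp (Complex.I * ((Real.pi:ℂ) - (t:ℂ)))) *
            Complex.sinh ((Real.pi:ℂ) * ((ε:ℂ) * Complex.exp (Complex.I * ((Real.pi:ℂ) - (t:ℂ))))) *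
            Complex.sinh (2 * (Real.pi:ℂ) *
              ((ε:ℂ) * Complex.exp (Complex.I * ((Real.pi:ℂ) - (t:ℂ)))) / (r:ℂ)))⁻¹‖
          ≤ (4 * ε * m)⁻¹ := by
        rw [norm_inv]
        exact inv_anti₀ (by positivity) hDlow
      calc ‖2 * ((ε:ℂ) * Complex.exp (Complex.I * ((Real.pi:ℂ) - (t:ℂ)))) *
            (Complex.exp ((2 * z - (Real.pi:ℂ)) *
              ((ε:ℂ) * Complex.exp (Complex.I * ((Real.pi:ℂ) - (t:ℂ))))) *
            ((4 * ((ε:ℂ) * Complex.exp (Complex.I * ((Real.pi:ℂ) - (t:ℂ)))) *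
              Complex.sinh ((Real.pi:ℂ) *
                ((ε:ℂ) * Complex.exp (Complex.I * ((Real.pi:ℂ) - (t:ℂ))))) *
              Complex.sinh (2 * (Real.pi:ℂ) *
                ((ε:ℂ) * Complex.exp (Complex.I * ((Real.pi:ℂ) - (t:ℂ)))) / (r:ℂ)))⁻¹ *
             (-Complex.I * (ε:ℂ) * Complex.exp (Complex.I * ((Real.pi:ℂ) - (t:ℂ))))))‖
          = 2 * ε * (‖Complex.exp ((2 * z - (Real.pi:ℂ)) *
              ((ε:ℂ) * Complex.exp (Complex.I * ((Real.pi:ℂ) - (t:ℂ)))))‖ *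
            (‖(4 * ((ε:ℂ) * Complex.exp (Complex.I * ((Real.pi:ℂ) - (t:ℂ)))) *
              Complex.sinh ((Real.pi:ℂ) *
                ((ε:ℂ) * Complex.exp (Complex.I * ((Real.pi:ℂ) - (t:ℂ))))) *
              Complex.sinh (2 * (Real.pi:ℂ) *
                ((ε:ℂ) * Complex.exp (Complex.I * ((Real.pi:ℂ) - (t:ℂ)))) / (r:ℂ)))⁻¹‖ * ε)) := by
            simp only [norm_mul, norm_neg, Complex.norm_I, hexp1, hεn, h2n]
            ring
        _ ≤ 2 * ε * (Real.exp ((2 * (‖z₀‖ + δ) + Real.pi) * ε) * ((4 * ε * m)⁻¹ * ε)) := by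
            gcongr
  -- assembling
  have e1 : ∀ z : ℂ, (fun x : ℝ => qdInt r z (x:ℂ))
      = fun x : ℝ => Complex.exp ((2 * z - (Real.pi:ℂ)) * (x:ℂ)) *
        (4 * (x:ℂ) * Complex.sinh ((Real.pi:ℂ) * (x:ℂ)) *
          Complex.sinh (2 * (Real.pi:ℂ) * (x:ℂ) / (r:ℂ)))⁻¹ :=
    fun z => funext fun x => hqd z _
  have e2 : ∀ z : ℂ, (fun t : ℝ =>
        qdInt r z ((ε:ℂ) * Complex.exp (Complex.I * ((Real.pi:ℂ) - (t:ℂ)))) *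
          (-Complex.I * (ε:ℂ) * Complex.exp (Complex.I * ((Real.pi:ℂ) - (t:ℂ)))))
      = fun t : ℝ =>
        Complex.exp ((2 * z - (Real.pi:ℂ)) *
          ((ε:ℂ) * Complex.exp (Complex.I * ((Real.pi:ℂ) - (t:ℂ))))) *
        ((4 * ((ε:ℂ) * Complex.exp (Complex.I * ((Real.pi:ℂ) - (t:ℂ)))) *
          Complex.sinh ((Real.pi:ℂ) * ((ε:ℂ) * Complex.exp (Complex.I * ((Real.pi:ℂ) - (t:ℂ))))) *
          Complex.sinh (2 * (Real.pi:ℂ) * ((ε:ℂ) * Complex.exp (Complex.I * ((Real.pi:ℂ) - (t:ℂ)))) /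
            (r:ℂ)))⁻¹ *
         (-Complex.I * (ε:ℂ) * Complex.exp (Complex.I * ((Real.pi:ℂ) - (t:ℂ))))) :=
    fun z => funext fun t => by rw [hqd]; ring
  have hq : qdContour r ε = fun z =>
      (∫ x in Set.Iic (-ε), Complex.exp ((2 * z - (Real.pi:ℂ)) * (x:ℂ)) *
        (4 * (x:ℂ) * Complex.sinh ((Real.pi:ℂ) * (x:ℂ)) *
          Complex.sinh (2 * (Real.pi:ℂ) * (x:ℂ) / (r:ℂ)))⁻¹) +
      (∫ t in Set.Ioc (0:ℝ) Real.pi,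
        Complex.exp ((2 * z - (Real.pi:ℂ)) *
          ((ε:ℂ) * Complex.exp (Complex.I * ((Real.pi:ℂ) - (t:ℂ))))) *
        ((4 * ((ε:ℂ) * Complex.exp (Complex.I * ((Real.pi:ℂ) - (t:ℂ)))) *
          Complex.sinh ((Real.pi:ℂ) * ((ε:ℂ) * Complex.exp (Complex.I * ((Real.pi:ℂ) - (t:ℂ))))) *
          Complex.sinh (2 * (Real.pi:ℂ) * ((ε:ℂ) * Complex.exp (Complex.I * ((Real.pi:ℂ) - (t:ℂ)))) /
            (r:ℂ)))⁻¹ *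
         (-Complex.I * (ε:ℂ) * Complex.exp (Complex.I * ((Real.pi:ℂ) - (t:ℂ)))))) +
      (∫ x in Set.Ici ε, Complex.exp ((2 * z - (Real.pi:ℂ)) * (x:ℂ)) *
        (4 * (x:ℂ) * Complex.sinh ((Real.pi:ℂ) * (x:ℂ)) *
          Complex.sinh (2 * (Real.pi:ℂ) * (x:ℂ) / (r:ℂ)))⁻¹) := by
    funext z
    unfold qdContour
    rw [intervalIntegral.integral_of_le Real.pi_pos.le, e1 z, e2 z]
  show DifferentiableAt ℂ (fun z => (4 * (Real.pi:ℂ) * Complex.I / (r:ℂ)) * qdContour r ε z) z₀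
  apply DifferentiableAt.const_mul
  rw [hq]
  exact (hleft.add hmid).add hright
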